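/- arXiv:2310.13835 — 6 statements merged into one kernel-verified Lean document; each statement's English description precedes it below -/
import Mathlib

section
/- Let R be a saturated transfer system on a finite modular lattice M, and suppose x, y ∈ M are both covered by x ∨ y and both cover x ∧ y (a covering diamond). If three of the four covering relations among x ∧ y, x, y, x ∨ y belong to R, then so does the fourth. -/
/-- A transfer system on a lattice `M`: a partial order refining `≤`
(reflexive, transitive, and refining `≤`, hence antisymmetric) that is
closed under restriction. -/
structure TransferSystem (M : Type*) [Lattice M] where
  rel : M → M → Prop
  refl : ∀ x, rel x x
  trans : ∀ x y z, rel x y → rel y z → rel x z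
  le_of_rel : ∀ x y, rel x y → x ≤ y
  restrict : ∀ x y z, rel x z → y ≤ z → rel (x ⊓ y) y

/-- A transfer system is saturated when `x R y ≤ z` and `x R z` imply `y R z`. -/
def TransferSystem.Saturated {M : Type*} [Lattice M] (R : TransferSystem M) : Prop :=
  ∀ x y z, R.rel x y → y ≤ z → R.rel x z → R.rel y z

/-- A saturated cover on a lattice: a set `Q` of covering relations closed
under restriction (condition 1) and satisfying the 3-out-of-4 rule on
covering diamonds (condition 2). -/
def IsSaturatedCover {M : Type*} [Lattice M] (Q : M → M → Prop) : Prop :=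
  (∀ x y, Q x y → x ⋖ y) ∧
  (∀ x y, Q x (x ⊔ y) → Q (x ⊓ y) y) ∧
  (∀ x y, x ⊓ y ⋖ x → x ⊓ y ⋖ y → x ⋖ x ⊔ y → y ⋖ x ⊔ y →
    (Q (x ⊓ y) x ∧ Q (x ⊓ y) y ∧ Q x (x ⊔ y) → Q y (x ⊔ y)) ∧
    (Q (x ⊓ y) x ∧ Q (x ⊓ y) y ∧ Q y (x ⊔ y) → Q x (x ⊔ y)) ∧
    (Q (x ⊓ y) x ∧ Q x (x ⊔ y) ∧ Q y (x ⊔ y) → Q (x ⊓ y) y) ∧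
    (Q (x ⊓ y) y ∧ Q x (x ⊔ y) ∧ Q y (x ⊔ y) → Q (x ⊓ y) x))

/-- for a saturated transfer system R on a finite modular
lattice and a covering diamond on x, y, if three of the four covering
relations among x ⊓ y, x, y, x ⊔ y belong to R, then so does the fourth. -/
theorem stmt9 {M : Type*} [Lattice M] [Finite M] [IsModularLattice M]
    (R : TransferSystem M) (hsat : R.Saturated)
    (x y : M)
    (h1 : x ⊓ y ⋖ x) (h2 : x ⊓ y ⋖ y) (h3 : x ⋖ x ⊔ y) (h4 : y ⋖ x ⊔ y) :
    (R.rel (x ⊓ y) x ∧ R.rel (x ⊓ y) y ∧ R.rel x (x ⊔ y) → R.rel y (x ⊔ y)) ∧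
    (R.rel (x ⊓ y) x ∧ R.rel (x ⊓ y) y ∧ R.rel y (x ⊔ y) → R.rel x (x ⊔ y)) ∧
    (R.rel (x ⊓ y) x ∧ R.rel x (x ⊔ y) ∧ R.rel y (x ⊔ y) → R.rel (x ⊓ y) y) ∧
    (R.rel (x ⊓ y) y ∧ R.rel x (x ⊔ y) ∧ R.rel y (x ⊔ y) → R.rel (x ⊓ y) x) := by
  refine ⟨?_, ?_, ?_, ?_⟩
  · rintro ⟨ha, hb, hc⟩
    exact hsat _ _ _ hb le_sup_right (R.trans _ _ _ ha hc)
  · rintro ⟨ha, hb, hc⟩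
    exact hsat _ _ _ ha le_sup_left (R.trans _ _ _ hb hc)
  · rintro ⟨ha, hb, hc⟩
    exact R.restrict _ _ _ hb le_sup_right
  · rintro ⟨ha, hb, hc⟩
    have := R.restrict _ x _ hc le_sup_left
    rwa [inf_comm y x] at this
end

section
/- Let R be a saturated transfer system on a finite modular lattice M, and let R_cov denote the set of covering relations of M that belong to R. Then R_cov is a saturated cover on M. -/
/-- the set of covering relations of a saturated transfer
system on a finite modular lattice is a saturated cover. -/
theorem stmt10 {M : Type*} [Lattice M] [Finite M] [IsModularLattice M]
    (R : TransferSystem M) (hsat : R.Saturated) :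
    IsSaturatedCover (fun x y => R.rel x y ∧ x ⋖ y) := by
  refine ⟨fun x y h => h.2, fun x y h => ?_, fun x y h1 h2 h3 h4 => ?_⟩
  · exact ⟨R.restrict x y (x ⊔ y) h.1 le_sup_right, inf_covBy_of_covBy_sup_left h.2⟩
  · refine ⟨fun ⟨hx, hy, hxs⟩ => ?_, fun ⟨hx, hy, hys⟩ => ?_,
      fun ⟨hx, hxs, hys⟩ => ?_, fun ⟨hy, hxs, hys⟩ => ?_⟩
    · exact ⟨hsat _ _ _ hy.1 le_sup_right (R.trans _ _ _ hx.1 hxs.1), h4⟩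
    · exact ⟨hsat _ _ _ hx.1 le_sup_left (R.trans _ _ _ hy.1 hys.1), h3⟩
    · exact ⟨R.restrict x y (x ⊔ y) hxs.1 le_sup_right, h2⟩
    · have := R.restrict y x (x ⊔ y) hys.1 le_sup_left
      rw [inf_comm] at this
      exact ⟨this, h1⟩
end

section
/- Let M be a finite modular lattice, Q a saturated cover on M, and x ≤ y ≤ w ≤ z elements of M with x ⟨Q⟩ z. Then y ⟨Q⟩ w, where ⟨Q⟩ is the transfer system generated by Q. -/
section Aux

variable {M : Type*} [Lattice M] [IsModularLattice M]

/-- If `u ⋖ v` and `v ≰ u ⊔ a`, then `(u ⊔ a) ⊓ v = u`. -/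
private lemma aux_inf_eq {u v a : M} (h : u ⋖ v) (hv : ¬ v ≤ u ⊔ a) :
    (u ⊔ a) ⊓ v = u := by
  rcases h.eq_or_eq (le_inf le_sup_left h.le) inf_le_right with e | e
  · exact e
  · exact absurd (e ▸ inf_le_left) hv

/-- Up-transposition of a cover in a modular lattice. -/
private lemma covUp {u v a : M} (h : u ⋖ v) (hv : ¬ v ≤ u ⊔ a) :
    u ⊔ a ⋖ v ⊔ a := by
  have hvin : (u ⊔ a) ⊓ v = u := aux_inf_eq h hv
  refine ⟨lt_of_le_of_ne (sup_le_sup_right h.le a) (fun e => hv (e ▸ le_sup_left)), ?_⟩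
  intro t h1 h2
  have hat : a ≤ t := le_sup_right.trans h1.le
  have hut : u ≤ t := le_sup_left.trans h1.le
  rcases h.eq_or_eq (le_inf hut h.le) (inf_le_right : t ⊓ v ≤ v) with e | e
  · have h3 : t ⊓ v ⊔ a = t ⊓ (v ⊔ a) := inf_sup_assoc_of_le v hat
    rw [e, inf_eq_left.2 h2.le] at h3
    exact absurd (h3 ▸ h1) (lt_irrefl _)
  · exact absurd (sup_le (e ▸ inf_le_left) hat) (not_le_of_gt h2)

/-- Down-transposition of a cover in a modular lattice. -/
private lemma covDown {u v a : M} (h : u ⋖ v) (hv : u ⊔ v ⊓ a = v) :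
    u ⊓ a ⋖ v ⊓ a := by
  have hlt : u ⊓ a < v ⊓ a := by
    refine lt_of_le_of_ne (inf_le_inf_right a h.le) fun e => ?_
    have h2 : v ⊓ a ≤ u := e ▸ inf_le_left
    exact h.ne (by rw [← hv, sup_eq_left.2 h2])
  refine ⟨hlt, fun t h1 h2 => ?_⟩
  have hta : t ≤ a := h2.le.trans inf_le_right
  have htv : t ≤ v := h2.le.trans inf_le_left
  rcases h.eq_or_eq (le_sup_left : u ≤ u ⊔ t) (sup_le h.le htv) with e | e
  · exact absurd (le_inf (le_sup_right.trans e.le) hta) (not_le_of_gt h1)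
  · have h3 : (t ⊔ u) ⊓ a = t ⊔ u ⊓ a := sup_inf_assoc_of_le u hta
    rw [sup_comm t u, e, sup_eq_left.2 h1.le] at h3
    exact absurd h3 h2.ne'

variable {Q : M → M → Prop}

/-- Key step: if all covers inside `[a,b]` lie in `Q`, `b ⋖ b'` and `Q b b'`,
then all covers inside `[a,b']` lie in `Q`. -/
private lemma keyStep (hQ : IsSaturatedCover Q) {a b b' : M} (hab : a ≤ b)
    (hcov : ∀ u v, a ≤ u → u ⋖ v → v ≤ b → Q u v) (hbb' : b ⋖ b') (hQb : Q b b') :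
    ∀ u v, a ≤ u → u ⋖ v → v ≤ b' → Q u v := by
  intro u v hau huv hvb'
  by_cases hvb : v ≤ b
  · exact hcov u v hau huv hvb
  have hbv : b ⊔ v = b' := by
    rcases hbb'.eq_or_eq (le_sup_left : b ≤ b ⊔ v) (sup_le hbb'.le hvb') with e | e
    · exact absurd (le_sup_right.trans e.le) hvb
    · exact e
  by_cases hub : u ≤ b
  · have h1 : Q (b ⊓ v) v := hQ.2.1 b v (by rw [hbv]; exact hQb)
    have h2 : b ⊓ v = u := by
      rcases huv.eq_or_eq (le_inf hub huv.le) (inf_le_right : b ⊓ v ≤ v) with e | e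
      · exact e
      · exact absurd (e ▸ inf_le_left) hvb
    rwa [h2] at h1
  have huvb' : u ≤ b' := huv.le.trans hvb'
  have hbu : b ⊔ u = b' := by
    rcases hbb'.eq_or_eq (le_sup_left : b ≤ b ⊔ u) (sup_le hbb'.le huvb') with e | e
    · exact absurd (le_sup_right.trans e.le) hub
    · exact e
  rcases huv.eq_or_eq (le_sup_left : u ≤ u ⊔ v ⊓ b) (sup_le huv.le inf_le_left) with e | e
  · -- impossible configuration
    have hvbu : v ⊓ b ≤ u := le_sup_right.trans e.le
    have hm : u ⊓ b = v ⊓ b :=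
      le_antisymm (inf_le_inf_right b huv.le) (le_inf hvbu inf_le_right)
    have hmv : b ⊓ v ⋖ v := by
      have h4 := covDown hbb' (a := v) (by rw [inf_eq_right.2 hvb', hbv])
      rwa [inf_eq_right.2 hvb'] at h4
    have hlt : b ⊓ v < u := by
      rw [inf_comm, ← hm]
      exact lt_of_le_of_ne inf_le_left (fun e2 => hub (inf_eq_left.1 e2))
    exact (hmv.2 hlt huv.lt).elim
  · -- main diamond argument
    have hmp : u ⊓ b ⋖ v ⊓ b := covDown huv e
    have hmu : u ⊓ b ⋖ u := by
      have h4 := covDown hbb' (a := u) (by rw [inf_eq_right.2 huvb', hbu])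
      rwa [inf_comm b u, inf_comm b' u, inf_eq_left.2 huvb'] at h4
    have hpv : v ⊓ b ⋖ v := by
      have h4 := covDown hbb' (a := v) (by rw [inf_eq_right.2 hvb', hbv])
      rwa [inf_comm b v, inf_comm b' v, inf_eq_left.2 hvb'] at h4
    have hQmu : Q (u ⊓ b) u := by
      have h4 := hQ.2.1 b u (by rw [hbu]; exact hQb)
      rwa [inf_comm] at h4
    have hQpv : Q (v ⊓ b) v := by
      have h4 := hQ.2.1 b v (by rw [hbv]; exact hQb)
      rwa [inf_comm] at h4
    have hQmp : Q (u ⊓ b) (v ⊓ b) := hcov _ _ (le_inf hau hab) hmp inf_le_right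
    have hxy : u ⊓ (v ⊓ b) = u ⊓ b := by
      rw [← inf_assoc, inf_eq_left.2 huv.le]
    have hdiamond := hQ.2.2 u (v ⊓ b)
      (by rw [hxy]; exact hmu) (by rw [hxy]; exact hmp)
      (by rw [e]; exact huv) (by rw [e]; exact hpv)
    have h5 := hdiamond.2.1
      ⟨by rw [hxy]; exact hQmu, by rw [hxy]; exact hQmp, by rw [e]; exact hQpv⟩
    rwa [e] at h5

/-- Transitivity of the "all covers in the interval" relation. -/
private lemma transCovers [Finite M] (hQ : IsSaturatedCover Q) :
    ∀ b a c : M, a ≤ b → b ≤ c →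
      (∀ u v, a ≤ u → u ⋖ v → v ≤ b → Q u v) →
      (∀ u v, b ≤ u → u ⋖ v → v ≤ c → Q u v) →
      ∀ u v, a ≤ u → u ⋖ v → v ≤ c → Q u v := by
  intro b
  induction b using WellFoundedGT.induction with
  | _ b IH =>
    intro a c hab hbc hcovab hcovbc u v hau huv hvc
    rcases eq_or_lt_of_le hbc with rfl | hlt
    · exact hcovab u v hau huv hvc
    · obtain ⟨b', hbb', hb'c⟩ := exists_covBy_le_of_lt hlt
      have hQb : Q b b' := hcovbc b b' le_rfl hbb' hb'c
      have hcovab' := keyStep hQ hab hcovab hbb' hQb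
      exact IH b' hbb'.lt a c (hab.trans hbb'.le) hb'c hcovab'
        (fun u v h1 h2 h3 => hcovbc u v (hbb'.le.trans h1) h2 h3) u v hau huv hvc

/-- If all covers in `[a,b]` lie in `Q`, then `a T b` for any transfer system `T ⊇ Q`. -/
private lemma genRel [Finite M] (T : TransferSystem M)
    (hTQ : ∀ a b, Q a b → T.rel a b) :
    ∀ a b : M, a ≤ b → (∀ u v, a ≤ u → u ⋖ v → v ≤ b → Q u v) → T.rel a b := by
  intro a
  induction a using WellFoundedGT.induction with
  | _ a IH =>
    intro b hab hcov
    rcases eq_or_lt_of_le hab with rfl | hlt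
    · exact T.refl a
    · obtain ⟨a', haa', ha'b⟩ := exists_covBy_le_of_lt hlt
      have hQa : Q a a' := hcov a a' le_rfl haa' ha'b
      exact T.trans a a' b (hTQ a a' hQa)
        (IH a' haa'.lt b ha'b (fun u v h1 h2 h3 => hcov u v (haa'.le.trans h1) h2 h3))

end Aux

/-- if Q is a saturated cover on a finite modular lattice, T is
the transfer system generated by Q (least transfer system containing Q),
x ≤ y ≤ w ≤ z, and x ⟨Q⟩ z, then y ⟨Q⟩ w. -/
theorem stmt11 {M : Type*} [Lattice M] [Finite M] [IsModularLattice M]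
    (Q : M → M → Prop) (hQ : IsSaturatedCover Q)
    (T : TransferSystem M)
    (hTQ : ∀ a b, Q a b → T.rel a b)
    (hTleast : ∀ S : TransferSystem M, (∀ a b, Q a b → S.rel a b) →
        ∀ a b, T.rel a b → S.rel a b)
    (x y w z : M) (hxy : x ≤ y) (hyw : y ≤ w) (hwz : w ≤ z)
    (hxz : T.rel x z) :
    T.rel y w := by
  -- The transfer system of "all covers in the interval lie in Q".
  set S : TransferSystem M :=
    { rel := fun a b => a ≤ b ∧ ∀ u v, a ≤ u → u ⋖ v → v ≤ b → Q u v
      refl := fun a => ⟨le_rfl, fun u v h1 h2 h3 =>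
        absurd (h2.lt.trans_le (h3.trans h1)) (lt_irrefl u)⟩
      trans := fun a b c hab hbc => ⟨hab.1.trans hbc.1,
        transCovers hQ b a c hab.1 hbc.1 hab.2 hbc.2⟩
      le_of_rel := fun a b h => h.1
      restrict := by
        intro a yy c hac hyc
        refine ⟨inf_le_right, fun u v h1 h2 h3 => ?_⟩
        have hva : v ⊓ a ≤ u := by
          calc v ⊓ a ≤ yy ⊓ a := inf_le_inf_right a (h3.trans le_rfl)
            _ = a ⊓ yy := inf_comm yy a
            _ ≤ u := h1
        have hnv : ¬ v ≤ u ⊔ a := by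
          intro hv
          have hmod : (u ⊔ a) ⊓ v = u ⊔ a ⊓ v := sup_inf_assoc_of_le a h2.le
          rw [inf_eq_right.2 hv] at hmod
          have : v ≤ u := hmod.le.trans (sup_le le_rfl (by rw [inf_comm]; exact hva))
          exact absurd (h2.lt.trans_le this) (lt_irrefl u)
        have hcv : u ⊔ a ⋖ v ⊔ a := covUp h2 hnv
        have hQ' : Q (u ⊔ a) (v ⊔ a) :=
          hac.2 _ _ le_sup_right hcv (sup_le (h3.trans hyc) hac.1)
        have hsup : u ⊔ a ⊔ v = v ⊔ a := by
          rw [sup_comm u a, sup_assoc, sup_eq_right.2 h2.le, sup_comm]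
        have h4 := hQ.2.1 (u ⊔ a) v (by rw [hsup]; exact hQ')
        rwa [aux_inf_eq h2 hnv] at h4 }
  have hQS : ∀ a b, Q a b → S.rel a b := by
    intro a b hab
    have hcov : a ⋖ b := hQ.1 a b hab
    refine ⟨hcov.le, fun u v h1 h2 h3 => ?_⟩
    have hu : u = a := by
      rcases hcov.eq_or_eq h1 (h2.le.trans h3) with e | e
      · exact e
      · exact absurd ((e ▸ h2.lt).trans_le h3) (lt_irrefl b)
    subst hu
    have hv : v = b := by
      rcases hcov.eq_or_eq (h2.le) h3 with e | e
      · exact absurd (e ▸ h2.lt) (lt_irrefl u)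
      · exact e
    subst hv
    exact hab
  have hSxz : S.rel x z := hTleast S hQS x z hxz
  exact genRel T hTQ y w hyw
    (fun u v h1 h2 h3 => hSxz.2 u v (hxy.trans h1) h2 (h3.trans hwz))
end

section
/- Let M be a finite modular lattice and Q a saturated cover on M. Then the transfer system ⟨Q⟩ generated by Q is a saturated transfer system. -/
/-- the transfer system generated by a saturated cover on a
finite modular lattice is saturated. -/
theorem stmt12 {M : Type*} [Lattice M] [Finite M] [IsModularLattice M]
    (Q : M → M → Prop) (hQ : IsSaturatedCover Q)
    (T : TransferSystem M)
    (hTQ : ∀ a b, Q a b → T.rel a b)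
    (hTleast : ∀ S : TransferSystem M, (∀ a b, Q a b → S.rel a b) →
        ∀ a b, T.rel a b → S.rel a b) :
    T.Saturated := by
  obtain ⟨hcov, hres, hdia⟩ := hQ
  set R : M → M → Prop := Relation.ReflTransGen Q with hR
  have Rle : ∀ {u v}, R u v → u ≤ v := by
    intro u v h
    induction h with
    | refl => exact le_rfl
    | tail _ step ih => exact ih.trans (hcov _ _ step).le
  have Rrestrict : ∀ x y z, R x z → y ≤ z → R (x ⊓ y) y := by
    intro x y z hxz hyz
    induction hxz using Relation.ReflTransGen.head_induction_on with
    | refl =>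
      rw [inf_eq_right.mpr hyz]
    | head h' h ih =>
      rename_i x' c
      by_cases heq : x' ⊓ y = c ⊓ y
      · rw [heq]; exact ih
      · have hxc : x' ⋖ c := hcov _ _ h'
        have hle : x' ⊓ y ≤ c ⊓ y := inf_le_inf_right y hxc.le
        have hlt : x' ⊓ y < c ⊓ y := lt_of_le_of_ne hle heq
        have hsup : x' ⊔ (c ⊓ y) = c := by
          rcases hxc.eq_or_eq le_sup_left (sup_le hxc.le inf_le_left) with h1 | h1
          · exfalso
            have : c ⊓ y ≤ x' := le_sup_right.trans h1.le
            exact absurd (le_inf this inf_le_right) hlt.not_ge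
          · exact h1
        have hq : Q (x' ⊓ (c ⊓ y)) (c ⊓ y) := hres x' (c ⊓ y) (by rwa [hsup])
        have hxi : x' ⊓ (c ⊓ y) = x' ⊓ y := by
          rw [← inf_assoc, inf_eq_left.mpr hxc.le]
        rw [hxi] at hq
        exact Relation.ReflTransGen.head hq ih
  have lemA : ∀ z x, R x z → ∀ a, Q x a → a ≤ z → R a z := by
    intro z x hxz
    induction hxz using Relation.ReflTransGen.head_induction_on with
    | refl =>
      intro a ha haz
      exact absurd haz (hcov _ _ ha).lt.not_ge
    | head h' h ih =>
      rename_i x' b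
      intro a ha haz
      by_cases hab : a = b
      · exact hab ▸ h
      · have hxa : x' ⋖ a := hcov _ _ ha
        have hxb : x' ⋖ b := hcov _ _ h'
        have hba : b ⊓ a = x' := by
          rcases hxb.eq_or_eq (le_inf hxb.le hxa.le) inf_le_left with h1 | h1
          · exact h1.symm ▸ rfl
          · exfalso
            have hble : b ≤ a := h1 ▸ inf_le_right
            rcases hxa.eq_or_eq hxb.le hble with h2 | h2
            · exact hxb.lt.ne' h2
            · exact hab h2.symm
        have hbs : b ⋖ b ⊔ a := by
          rw [sup_comm]
          exact covBy_sup_of_inf_covBy_left (by rw [inf_comm, hba]; exact hxa)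
        have has : a ⋖ b ⊔ a := covBy_sup_of_inf_covBy_left (by rw [hba]; exact hxb)
        have hbz : b ≤ z := Rle h
        have hsz : b ⊔ a ≤ z := sup_le hbz haz
        have hrbs : R (b ⊓ (b ⊔ a)) (b ⊔ a) := Rrestrict b (b ⊔ a) z h hsz
        rw [inf_eq_left.mpr le_sup_left] at hrbs
        have hQbs : Q b (b ⊔ a) := by
          rcases Relation.ReflTransGen.cases_head hrbs with h1 | ⟨c, hc1, hc2⟩
          · exact absurd h1 hbs.lt.ne
          · rcases hbs.eq_or_eq (hcov _ _ hc1).le (Rle hc2) with h2 | h2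
            · exact absurd h2 (hcov _ _ hc1).lt.ne'
            · exact h2 ▸ hc1
        have hQas : Q a (b ⊔ a) := by
          have := (hdia b a (by rw [hba]; exact hxb) (by rw [hba]; exact hxa) hbs has).1
          exact this ⟨by rw [hba]; exact h', by rw [hba]; exact ha, hQbs⟩
        exact Relation.ReflTransGen.head hQas (ih (b ⊔ a) hQbs hsz)
  let S : TransferSystem M :=
    { rel := R
      refl := fun _ => Relation.ReflTransGen.refl
      trans := fun _ _ _ h1 h2 => h1.trans h2
      le_of_rel := fun _ _ h => Rle h
      restrict := fun x y z h1 h2 => Rrestrict x y z h1 h2 }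
  have hTR : ∀ a b, T.rel a b → R a b :=
    hTleast S (fun a b h => Relation.ReflTransGen.single h)
  have hRT : ∀ a b, R a b → T.rel a b := by
    intro a b h
    induction h with
    | refl => exact T.refl a
    | tail _ step ih => exact T.trans _ _ _ ih (hTQ _ _ step)
  intro x y z hxy hyz hxz
  have rxy := hTR x y hxy
  have rxz := hTR x z hxz
  refine hRT y z ?_
  clear hxy hxz
  induction rxy using Relation.ReflTransGen.head_induction_on with
  | refl => exact rxz
  | head h' h ih =>
    rename_i x' c
    exact ih (lemA z x' rxz c h' ((Rle h).trans hyz))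
end

section
/- Let M be a finite modular lattice and Q a saturated cover on M. Then Q is closed under (non-identity) restriction: if r Q t, ℓ ≤ t, and ℓ ∧ r ≠ ℓ, then (ℓ ∧ r) Q ℓ. -/
/-- a saturated cover on a finite modular lattice is closed
under non-identity restriction. -/
theorem stmt13 {M : Type*} [Lattice M] [Finite M] [IsModularLattice M]
    (Q : M → M → Prop) (hQ : IsSaturatedCover Q)
    (r t l : M) (hrt : Q r t) (hlt : l ≤ t) (hne : l ⊓ r ≠ l) :
    Q (l ⊓ r) l := by
  obtain ⟨hcov, hres, -⟩ := hQ
  have hc := hcov r t hrt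
  have hlr : ¬ l ≤ r := fun h => hne (inf_eq_left.2 h)
  have hsup : r ⊔ l = t := by
    rcases hc.eq_or_eq le_sup_left (sup_le hc.le hlt) with h | h
    · exact absurd (le_sup_right.trans h.le) hlr
    · exact h
  have : Q r (r ⊔ l) := hsup ▸ hrt
  have := hres r l this
  rwa [inf_comm] at this
end

section
/- Let M be a finite modular lattice. The assignments Q ↦ ⟨Q⟩ (generated transfer system) and R ↦ R_cov (set of covering relations of M contained in R) are mutually inverse bijections between the set of saturated covers on M and the set of saturated transfer systems on M. In particular, a subset Q of covering relations of M is the set of covering relations of some saturated transfer system if and only if Q is a saturated cover. -/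
section Aux

variable {M : Type*} [Lattice M] [Finite M] [IsModularLattice M]

/-- If every cover inside `[x,y]` lies in `Q`, then any transfer system containing `Q`
relates `x` to `y` (chain argument). -/
lemma rel_of_full (S : TransferSystem M) {Q : M → M → Prop}
    (hQS : ∀ a b, Q a b → S.rel a b) :
    ∀ x y : M, x ≤ y → (∀ a b, x ≤ a → a ⋖ b → b ≤ y → Q a b) → S.rel x y := by
  intro x y
  have key : ∀ n (x : M), (Set.Ioc x y).ncard = n → x ≤ y →
      (∀ a b, x ≤ a → a ⋖ b → b ≤ y → Q a b) → S.rel x y := by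
    intro n
    induction n using Nat.strong_induction_on with
    | _ n ih =>
      intro x hn hxy hfull
      rcases eq_or_lt_of_le hxy with rfl | hlt
      · exact S.refl x
      · obtain ⟨t, hxt, hty⟩ := exists_covBy_le_of_lt hlt
        have hxtS : S.rel x t := hQS _ _ (hfull x t le_rfl hxt hty)
        have hsub : Set.Ioc t y ⊂ Set.Ioc x y := by
          constructor
          · exact fun w hw => ⟨hxt.lt.trans hw.1, hw.2⟩
          · intro hcon
            exact absurd (hcon ⟨hxt.lt, hty⟩).1 (lt_irrefl t)
        have hlt' : (Set.Ioc t y).ncard < n := by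
          rw [← hn]
          exact Set.ncard_lt_ncard hsub (Set.toFinite _)
        exact S.trans _ _ _ hxtS
          (ih _ hlt' t rfl hty (fun a b ha hab hb => hfull a b (hxt.le.trans ha) hab hb))
  exact fun hxy hfull => key _ x rfl hxy hfull

/-- Key transitivity lemma: fullness of intervals composes, given a saturated cover. -/
lemma full_trans {Q : M → M → Prop} (hQ : IsSaturatedCover Q) {x y z : M}
    (hxy : x ≤ y) (hyz : y ≤ z)
    (h1 : ∀ a b, x ≤ a → a ⋖ b → b ≤ y → Q a b)
    (h2 : ∀ a b, y ≤ a → a ⋖ b → b ≤ z → Q a b) :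
    ∀ u v, x ≤ u → u ⋖ v → v ≤ z → Q u v := by
  have key : ∀ n (u v : M), (Set.Icc (u ⊓ y) u).ncard = n →
      x ≤ u → u ⋖ v → v ≤ z → Q u v := by
    intro n
    induction n using Nat.strong_induction_on with
    | _ n ih =>
      intro u v hn hxu huv hvz
      set m := u ⊓ y with hm
      set p := v ⊓ y with hp
      have hmy : m ≤ y := inf_le_right
      have hmu : m ≤ u := inf_le_left
      have hmp : m ≤ p := le_inf (inf_le_left.trans huv.le) inf_le_right
      by_cases hpu : p ≤ u
      · -- Case B: go through [y,z] and condition (1)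
        have hkey : (u ⊔ y) ⊓ v = u := by
          rw [sup_inf_assoc_of_le y (huv.le)]
          rw [inf_comm y v]
          exact sup_eq_left.2 hpu
        have hcov : (u ⊔ y) ⋖ (v ⊔ y) := by
          have h := covBy_sup_of_inf_covBy_left (a := v) (b := u ⊔ y)
            (by rw [inf_comm, hkey]; exact huv)
          rwa [sup_comm v (u ⊔ y), sup_assoc, sup_comm y v, ← sup_assoc,
            sup_eq_right.2 huv.le] at h
        have hQtop : Q (u ⊔ y) (v ⊔ y) := h2 _ _ le_sup_right hcov (sup_le hvz hyz)
        have hcond := hQ.2.1 (u ⊔ y) v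
        rw [hkey] at hcond
        apply hcond
        have : (u ⊔ y) ⊔ v = v ⊔ y := by
          rw [sup_comm u y, sup_assoc, sup_eq_right.2 huv.le, sup_comm]
        rwa [this]
      · -- Case A : v = u ⊔ p
        have hupv : u ⊔ p = v := by
          have hlt : u < u ⊔ p := lt_of_le_of_ne le_sup_left
            (fun h => hpu (le_sup_right.trans h.ge))
          have hle : u ⊔ p ≤ v := sup_le huv.le inf_le_left
          rcases lt_or_eq_of_le hle with hlt' | h
          · exact absurd hlt' (huv.2 hlt)
          · exact h
        by_cases huy : u ≤ y
        · exact h1 _ _ hxu huv (by rw [← hupv]; exact sup_le huy inf_le_right)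
        · -- pick t with m ≤ t ⋖ u
          have hmlt : m < u := lt_of_le_of_ne hmu (fun h => huy (h ▸ hmy))
          obtain ⟨t, hmt, htu⟩ := exists_le_covBy_of_lt hmlt
          set s := t ⊔ p with hs
          have hpum : p ⊓ u = m := by
            apply le_antisymm
            · exact le_inf inf_le_right (inf_le_left.trans inf_le_right)
            · exact le_inf hmp hmu
          have hsu : s ⊓ u = t := by
            rw [hs, sup_inf_assoc_of_le p htu.le, hpum, sup_eq_left.2 hmt]
          have hsuv : s ⊔ u = v := by
            rw [hs, sup_comm t p, sup_assoc, sup_eq_right.2 htu.le, sup_comm p u, hupv]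
          have hty : t ⊓ y = m := by
            apply le_antisymm
            · exact le_inf ((inf_le_left.trans htu.le)) inf_le_right
            · exact le_inf hmt hmy
          have hcov_sv : s ⋖ v := by
            have h := covBy_sup_of_inf_covBy_left (a := u) (b := s)
              (by rw [inf_comm, hsu]; exact htu)
            rwa [sup_comm u s, hsuv] at h
          have hcov_ts : t ⋖ s := by
            have h := inf_covBy_of_covBy_sup_left (a := u) (b := s)
              (by rw [sup_comm u s, hsuv]; exact huv)
            rwa [inf_comm u s, hsu] at h
          -- measures
          have hmeas_t : (Set.Icc (t ⊓ y) t).ncard < n := by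
            rw [hty, ← hn]
            apply Set.ncard_lt_ncard _ (Set.toFinite _)
            constructor
            · exact fun w hw => ⟨hw.1, hw.2.trans htu.le⟩
            · intro hcon
              exact htu.lt.not_ge (hcon ⟨hmu, le_rfl⟩).2
          have htp : t ⊓ p = m := by
            apply le_antisymm
            · exact le_inf (inf_le_left.trans htu.le) (inf_le_right.trans inf_le_right)
            · exact le_inf hmt hmp
          have hsy : s ⊓ y = p := by
            rw [hs, sup_comm t p, sup_inf_assoc_of_le t inf_le_right, hty,
              sup_eq_left.2 hmp]
          have hmeas_s : (Set.Icc (s ⊓ y) s).ncard < n := by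
            have hcard : (Set.Icc (s ⊓ y) s).ncard = (Set.Icc (t ⊓ y) t).ncard := by
              rw [hsy, hty]
              have e : (Set.Icc (t ⊓ p) t) ≃ (Set.Icc p (t ⊔ p)) :=
                (infIccOrderIsoIccSup t p).toEquiv
              rw [htp] at e
              rw [hs, ← Nat.card_coe_set_eq, ← Nat.card_coe_set_eq]
              exact (Nat.card_congr e).symm
            rw [hcard, hty, ← hn]
            apply Set.ncard_lt_ncard _ (Set.toFinite _)
            constructor
            · exact fun w hw => ⟨hw.1, hw.2.trans htu.le⟩
            · intro hcon
              exact htu.lt.not_ge (hcon ⟨hmu, le_rfl⟩).2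
          have hxm : x ≤ m := le_inf hxu hxy
          have hQtu : Q t u := ih _ hmeas_t t u rfl (hxm.trans hmt) htu (huv.le.trans hvz)
          have hQts : Q t s := ih _ hmeas_t t s rfl (hxm.trans hmt) hcov_ts
            (hcov_sv.le.trans hvz)
          have hQsv : Q s v := ih _ hmeas_s s v rfl ((hxm.trans hmt).trans le_sup_left)
            hcov_sv hvz
          -- diamond on (u, s)
          have hd := hQ.2.2 u s (by rw [inf_comm u s, hsu]; exact htu)
            (by rw [inf_comm u s, hsu]; exact hcov_ts)
            (by rw [sup_comm u s, hsuv]; exact huv)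
            (by rw [sup_comm u s, hsuv]; exact hcov_sv)
          have := hd.2.1 ⟨by rw [inf_comm u s, hsu]; exact hQtu,
            by rw [inf_comm u s, hsu]; exact hQts,
            by rw [sup_comm u s, hsuv]; exact hQsv⟩
          rwa [sup_comm u s, hsuv] at this
  exact fun u v hxu huv hvz => key _ u v rfl hxu huv hvz


/-- The transfer system whose relation is "every cover inside the interval lies in `Q`". -/
def fullTS {Q : M → M → Prop} (hQ : IsSaturatedCover Q) : TransferSystem M where
  rel x y := x ≤ y ∧ ∀ a b, x ≤ a → a ⋖ b → b ≤ y → Q a b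
  refl x := ⟨le_rfl, fun a b hxa hab hbx =>
    absurd (hab.lt.trans_le (hbx.trans hxa)) (lt_irrefl a)⟩
  trans x y z hxy hyz := ⟨hxy.1.trans hyz.1,
    full_trans hQ hxy.1 hyz.1 hxy.2 hyz.2⟩
  le_of_rel x y h := h.1
  restrict x y z hxz hyz := by
    refine ⟨inf_le_right, fun a b ha hab hby => ?_⟩
    have hbxa : b ⊓ x ≤ a := (inf_le_inf_right x hby).trans (inf_comm y x ▸ ha)
    have hkey : (a ⊔ x) ⊓ b = a := by
      rw [sup_inf_assoc_of_le x hab.le, inf_comm x b, sup_eq_left.2 hbxa]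
    have hcov : (a ⊔ x) ⋖ (b ⊔ x) := by
      have h := covBy_sup_of_inf_covBy_left (a := b) (b := a ⊔ x)
        (by rw [inf_comm b (a ⊔ x), hkey]; exact hab)
      rwa [sup_comm b (a ⊔ x), sup_assoc, sup_comm x b, ← sup_assoc,
        sup_eq_right.2 hab.le] at h
    have hQtop : Q (a ⊔ x) (b ⊔ x) :=
      hxz.2 _ _ le_sup_right hcov (sup_le (hby.trans hyz) hxz.1)
    have hcond := hQ.2.1 (a ⊔ x) b
    rw [hkey] at hcond
    apply hcond
    have : (a ⊔ x) ⊔ b = b ⊔ x := by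
      rw [sup_comm a x, sup_assoc, sup_eq_right.2 hab.le, sup_comm]
    rwa [this]

end Aux

/-- on a finite modular lattice, Q ↦ ⟨Q⟩ and R ↦ R_cov are
mutually inverse bijections between saturated covers and saturated transfer
systems. Here `gen Q` denotes the transfer system generated by Q, i.e. the
least transfer system containing Q (on relations refining ≤). -/
theorem stmt14 {M : Type*} [Lattice M] [Finite M] [IsModularLattice M]
    (gen : (M → M → Prop) → TransferSystem M)
    (hgen : ∀ Q : M → M → Prop, (∀ a b, Q a b → a ≤ b) →
        (∀ a b, Q a b → (gen Q).rel a b) ∧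
        (∀ S : TransferSystem M, (∀ a b, Q a b → S.rel a b) →
            ∀ a b, (gen Q).rel a b → S.rel a b)) :
    (∀ Q : M → M → Prop, IsSaturatedCover Q →
        (gen Q).Saturated ∧ ∀ x y, ((gen Q).rel x y ∧ x ⋖ y) ↔ Q x y) ∧
    (∀ R : TransferSystem M, R.Saturated →
        IsSaturatedCover (fun x y => R.rel x y ∧ x ⋖ y) ∧
        ∀ x y, (gen (fun a b => R.rel a b ∧ a ⋖ b)).rel x y ↔ R.rel x y) := by
  constructor
  · -- saturated covers give saturated transfer systems
    intro Q hQ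
    have hQle : ∀ a b, Q a b → a ≤ b := fun a b h => (hQ.1 a b h).le
    obtain ⟨hg1, hg2⟩ := hgen Q hQle
    have hQT : ∀ a b, Q a b → (fullTS hQ).rel a b := by
      intro a b h
      refine ⟨hQle a b h, fun a' b' ha' hab' hb' => ?_⟩
      have hcov := hQ.1 a b h
      have ha'a : a' = a := by
        by_contra hne
        exact hcov.2 (lt_of_le_of_ne ha' (Ne.symm hne)) (hab'.lt.trans_le hb')
      have hb'b : b' = b := by
        by_contra hne
        exact hcov.2 (ha'a ▸ hab'.lt) (lt_of_le_of_ne hb' hne)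
      rw [ha'a, hb'b]; exact h
    have hsub1 : ∀ a b, (gen Q).rel a b → (fullTS hQ).rel a b := hg2 _ hQT
    have hsub2 : ∀ a b, (fullTS hQ).rel a b → (gen Q).rel a b := fun a b h =>
      rel_of_full (gen Q) hg1 a b h.1 h.2
    constructor
    · intro a b c hab hbc hac
      have h1 := hsub1 _ _ hab
      have h2 := hsub1 _ _ hac
      exact hsub2 _ _ ⟨hbc, fun a' b' ha' hab' hb' => h2.2 a' b' (h1.1.trans ha') hab' hb'⟩
    · intro a b
      constructor
      · rintro ⟨hrel, hcov⟩
        exact (hsub1 _ _ hrel).2 a b le_rfl hcov le_rfl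
      · intro h
        exact ⟨hg1 _ _ h, hQ.1 _ _ h⟩
  · -- saturated transfer systems give saturated covers
    intro R hsat
    have hQR : IsSaturatedCover (fun x y => R.rel x y ∧ x ⋖ y) := by
      refine ⟨fun x y h => h.2, fun x y h => ?_, fun x y h1 h2 h3 h4 => ?_⟩
      · exact ⟨inf_comm y x ▸ R.restrict x y (x ⊔ y) h.1 le_sup_right,
          inf_covBy_of_covBy_sup_left h.2⟩
      · refine ⟨fun ⟨r1, r2, r3⟩ => ⟨?_, h4⟩, fun ⟨r1, r2, r3⟩ => ⟨?_, h3⟩,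
          fun ⟨r1, r2, r3⟩ => ⟨?_, h2⟩, fun ⟨r1, r2, r3⟩ => ⟨?_, h1⟩⟩
        · exact hsat _ _ _ r2.1 le_sup_right (R.trans _ _ _ r1.1 r3.1)
        · exact hsat _ _ _ r1.1 le_sup_left (R.trans _ _ _ r2.1 r3.1)
        · have := R.restrict (x ⊓ y) y (x ⊔ y) (R.trans _ _ _ r1.1 r2.1) le_sup_right
          rwa [inf_comm (x ⊓ y) y, inf_eq_right.2 (inf_le_right : x ⊓ y ≤ y)] at this
        · have := R.restrict (x ⊓ y) x (x ⊔ y) (R.trans _ _ _ r1.1 r3.1) le_sup_left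
          rwa [inf_comm (x ⊓ y) x, inf_eq_right.2 (inf_le_left : x ⊓ y ≤ x)] at this
    refine ⟨hQR, ?_⟩
    obtain ⟨hg1, hg2⟩ := hgen (fun a b => R.rel a b ∧ a ⋖ b) (fun a b h => R.le_of_rel a b h.1)
    intro a b
    constructor
    · exact hg2 R (fun a b h => h.1) a b
    · intro h
      apply rel_of_full (gen _) hg1 a b (R.le_of_rel _ _ h)
      intro a' b' ha' hab' hb'
      refine ⟨?_, hab'⟩
      have hRab' : R.rel a b' := by
        have := R.restrict a b' b h hb'
        rwa [inf_eq_left.2 (ha'.trans hab'.le)] at this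
      have hRaa' : R.rel a a' := by
        have := R.restrict a a' b h (hab'.le.trans hb')
        rwa [inf_eq_left.2 ha'] at this
      exact hsat _ _ _ hRaa' hab'.le hRab'
end
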